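/- If r is an irreflexive and transitive binary relation on a countable type α, then there exists a function f : α → ℚ such that r a b implies f a < f b. -/
import Mathlib

theorem countable_strict_order_embeds_rat {α : Type*} [Countable α]
    (r : α → α → Prop) (hirr : ∀ a, ¬ r a a)
    (htrans : ∀ a b c, r a b → r b c → r a c) :
    ∃ f : α → ℚ, ∀ a b, r a b → f a < f b := by
  classical
  letI : PartialOrder α :=
    { le := fun a b => a = b ∨ r a b
      le_refl := fun a => Or.inl rfl
      le_trans := by
        rintro a b c (rfl | hab) (rfl | hbc)
        · exact Or.inl rfl
        · exact Or.inr hbc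
        · exact Or.inr hab
        · exact Or.inr (htrans _ _ _ hab hbc)
      le_antisymm := by
        rintro a b (rfl | hab) (h | hba)
        · rfl
        · rfl
        · exact h.symm
        · exact absurd (htrans _ _ _ hab hba) (hirr a) }
  haveI : Countable (LinearExtension α) := ‹Countable α›
  obtain ⟨e⟩ := Order.embedding_from_countable_to_dense (LinearExtension α) ℚ
  refine ⟨fun a => e (toLinearExtension a), fun a b hab => ?_⟩
  apply e.strictMono
  have hle : toLinearExtension (α := α) a ≤ toLinearExtension b :=
    toLinearExtension.monotone (Or.inr hab)
  have hne : toLinearExtension (α := α) a ≠ toLinearExtension b := by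
    intro h
    have : a = b := congrArg (fun x => x) h
    exact hirr a (this ▸ hab)
  exact lt_of_le_of_ne hle hne
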